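/- Let G be a connected plane graph, T a spanning tree, T♯ the dual tree, and e an edge of T joining components whose bounding faces are F1 and F2. Then the congestion e_G(A_e,B_e) equals the length of the unique cycle in T♯ ∪ {e*}. -/

import Mathlib

open SimpleGraph

/-- The congestion of the edge `e` of a spanning tree `T` of `G`: the number of edges
of `G` with one endpoint in each of the two components of `T - e`. -/
noncomputable def edgeCong {V : Type*} (G T : SimpleGraph V) (e : Sym2 V) : ℕ :=
  {f | f ∈ G.edgeSet ∧ ∃ x y, f = s(x, y) ∧ ¬ ((T.deleteEdges {e}).Reachable x y)}.ncard

/-- The edge congestion `ec(G:T)`. -/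
noncomputable def treeCong {V : Type*} (G T : SimpleGraph V) : ℕ :=
  sSup (edgeCong G T '' T.edgeSet)

/-- `T` is a spanning tree of `G`. -/
def IsSpanningTree {V : Type*} (G T : SimpleGraph V) : Prop := T ≤ G ∧ T.IsTree

/-- The spanning tree congestion `s(G)`. -/
noncomputable def stc {V : Type*} (G : SimpleGraph V) : ℕ :=
  sInf {n | ∃ T, IsSpanningTree G T ∧ treeCong G T = n}


/-- `D` is the edge set of a cycle of `G`. -/
def IsCycleEdges {V : Type*} (G : SimpleGraph V) (D : Set (Sym2 V)) : Prop :=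
  ∃ (v : V) (c : G.Walk v v), c.IsCycle ∧ D = {e | e ∈ c.edges}

/-- `D` is an edge cut of `G`: the set of edges between some vertex set `A`
and its complement. -/
def IsCutEdges {V : Type*} (G : SimpleGraph V) (D : Set (Sym2 V)) : Prop :=
  ∃ A : Set V, D = {f | f ∈ G.edgeSet ∧ ∃ x ∈ A, ∃ y ∈ Aᶜ, f = s(x, y)}

/-- `D` is a minimal (nonempty) edge cut of `G`. -/
def IsMinCut {V : Type*} (G : SimpleGraph V) (D : Set (Sym2 V)) : Prop :=
  IsCutEdges G D ∧ D.Nonempty ∧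
    ∀ D' ⊆ D, IsCutEdges G D' → D'.Nonempty → D' = D

/-- A connected plane graph `G` together with its dual graph `Gd`, presented
combinatorially (Whitney): vertices of `Gd` are the faces of `G`, `O` is the exterior
face, `d` is the bijection between edges of `G` and edges of `Gd` (each dual edge joins
the two faces on either side of the original edge), and duality is characterized by
cycles of one graph corresponding to minimal edge cuts of the other. -/
structure PlaneDual (V F : Type*) where
  G : SimpleGraph V
  Gd : SimpleGraph F
  O : F
  d : Sym2 V → Sym2 F
  dBij : Set.BijOn d G.edgeSet Gd.edgeSet
  conn : G.Connected
  connd : Gd.Connected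
  cycle_iff_minCut : ∀ D ⊆ G.edgeSet, IsCycleEdges G D ↔ IsMinCut Gd (d '' D)
  minCut_iff_cycle : ∀ D ⊆ G.edgeSet, IsMinCut G D ↔ IsCycleEdges Gd (d '' D)

variable {V F : Type*}

/-- An outer edge: an edge of `G` on the boundary of the exterior face. -/
def IsOuter (P : PlaneDual V F) (e : Sym2 V) : Prop :=
  e ∈ P.G.edgeSet ∧ P.O ∈ P.d e

/-- The index `i(F, e)`: the length of a shortest path in the dual graph from the
exterior face `O` to the face `Fc` whose first edge is `e*`. -/
noncomputable def pIndex (P : PlaneDual V F) (Fc : F) (e : Sym2 V) : ℕ :=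
  sInf {n | ∃ p : P.Gd.Walk P.O Fc, p.IsPath ∧ p.edges.head? = some (P.d e) ∧ p.length = n}

/-- The absolute index `i(F) = min over outer edges e of i(F, e)`. -/
noncomputable def absIndex (P : PlaneDual V F) (Fc : F) : ℕ :=
  sInf {n | ∃ e, IsOuter P e ∧ pIndex P Fc e = n}

/-- The dual tree `T♯` of a spanning tree `T` of `G`: the spanning subgraph of the dual
graph with edge set `{e* : e ∉ E(T)}`. -/
def dualTree (P : PlaneDual V F) (T : SimpleGraph V) : SimpleGraph F :=
  SimpleGraph.fromEdgeSet (P.d '' (P.G.edgeSet \ T.edgeSet))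


section MyAux
variable {V : Type*}


lemma myDeleteEdges_eq_sdiff (T : SimpleGraph V) (s : Set (Sym2 V)) :
    T.deleteEdges s = T \ SimpleGraph.fromEdgeSet s := by
  ext v w
  simp only [SimpleGraph.deleteEdges_adj, SimpleGraph.sdiff_adj, SimpleGraph.fromEdgeSet_adj]
  constructor
  · rintro ⟨h, h2⟩; exact ⟨h, fun hh => h2 hh.1⟩
  · rintro ⟨h, h2⟩; exact ⟨h, fun hh => h2 ⟨hh, h.ne⟩⟩

lemma myAuxReach {T : SimpleGraph V} {u w : V} :
    ∀ {a v : V}, T.Walk a v →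
      ((T.deleteEdges {s(u,w)}).Reachable u a ∨ (T.deleteEdges {s(u,w)}).Reachable w a) →
      ((T.deleteEdges {s(u,w)}).Reachable u v ∨ (T.deleteEdges {s(u,w)}).Reachable w v) := by
  intro a v p
  induction p with
  | nil => exact id
  | @cons a b c h q ih =>
    intro hyp
    apply ih
    by_cases hee : s(a, b) = s(u, w)
    · rw [Sym2.eq_iff] at hee
      rcases hee with ⟨rfl, rfl⟩ | ⟨rfl, rfl⟩
      · exact Or.inr (Reachable.refl _)
      · exact Or.inl (Reachable.refl _)
    · have hadj : (T.deleteEdges {s(u,w)}).Adj a b := by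
        rw [SimpleGraph.deleteEdges_adj]
        exact ⟨h, by simpa using hee⟩
      exact hyp.imp (fun r => r.trans hadj.reachable) (fun r => r.trans hadj.reachable)

lemma myReachMemIff {H : SimpleGraph V} {A' : Set V}
    (hside : ∀ a b, H.Adj a b → (a ∈ A' ↔ b ∈ A')) :
    ∀ {x y : V}, H.Reachable x y → (x ∈ A' ↔ y ∈ A') := by
  intro x y h
  obtain ⟨p⟩ := h
  induction p with
  | nil => exact Iff.rfl
  | @cons a b c h q ih => exact (hside a b h).trans ih

lemma myExistsCrossing {H : SimpleGraph V} {A' : Set V} :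
    ∀ {x y : V}, H.Walk x y → x ∈ A' → y ∉ A' →
      ∃ a ∈ A', ∃ b, b ∉ A' ∧ H.Adj a b := by
  intro x y p
  induction p with
  | nil => intro hx hy; exact absurd hx hy
  | @cons a b c h q ih =>
    intro hx hy
    by_cases hb : b ∈ A'
    · exact ih hb hy
    · exact ⟨a, hx, b, hb, h⟩

lemma myNotReach {T : SimpleGraph V} (hTtree : T.IsTree) {u w : V} (huw : T.Adj u w) :
    ¬ (T.deleteEdges {s(u,w)}).Reachable u w := by
  have hb := (SimpleGraph.isAcyclic_iff_forall_adj_isBridge.mp hTtree.IsAcyclic huw)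
  rw [SimpleGraph.isBridge_iff] at hb
  exact hb

lemma mySepIff {T : SimpleGraph V} (hTtree : T.IsTree) {u w : V} (huw : T.Adj u w)
    (x y : V) :
    ¬ (T.deleteEdges {s(u,w)}).Reachable x y ↔
      ((T.deleteEdges {s(u,w)}).Reachable u x ∧ ¬ (T.deleteEdges {s(u,w)}).Reachable u y) ∨
      (¬ (T.deleteEdges {s(u,w)}).Reachable u x ∧ (T.deleteEdges {s(u,w)}).Reachable u y) := by
  set T' := T.deleteEdges {s(u,w)} with hT'
  have hnr : ¬ T'.Reachable u w := myNotReach hTtree huw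
  have htot : ∀ v, T'.Reachable u v ∨ T'.Reachable w v := fun v =>
    myAuxReach (hTtree.isConnected.preconnected u v).some (Or.inl (Reachable.refl _))
  have hA : ∀ v, ¬ T'.Reachable u v → T'.Reachable w v := fun v hv =>
    (htot v).resolve_left hv
  constructor
  · intro h
    rcases htot x with hx | hx
    · exact Or.inl ⟨hx, fun hy => h (hx.symm.trans hy)⟩
    · have hx' : ¬ T'.Reachable u x := fun hc => hnr (hc.trans hx.symm)
      refine Or.inr ⟨hx', ?_⟩
      by_contra hy
      exact h ((hA x hx').symm.trans (hA y hy))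
  · rintro (⟨hx, hy⟩ | ⟨hx, hy⟩) hr
    · exact hy (hx.trans hr)
    · exact hx (hy.trans hr.symm)

lemma myCongSetEq {G T : SimpleGraph V} (hTtree : T.IsTree) {u w : V} (huw : T.Adj u w) :
    {f | f ∈ G.edgeSet ∧ ∃ x y, f = s(x,y) ∧ ¬ (T.deleteEdges {s(u,w)}).Reachable x y} =
    {f | f ∈ G.edgeSet ∧ ∃ x ∈ {v | (T.deleteEdges {s(u,w)}).Reachable u v},
        ∃ y ∈ {v | (T.deleteEdges {s(u,w)}).Reachable u v}ᶜ, f = s(x, y)} := by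
  ext f
  simp only [Set.mem_setOf_eq, Set.mem_compl_iff]
  refine and_congr_right fun hf => ?_
  constructor
  · rintro ⟨x, y, rfl, hr⟩
    rcases (mySepIff hTtree huw x y).mp hr with ⟨hx, hy⟩ | ⟨hx, hy⟩
    · exact ⟨x, hx, y, hy, rfl⟩
    · exact ⟨y, hy, x, hx, Sym2.eq_swap⟩
  · rintro ⟨x, hx, y, hy, rfl⟩
    exact ⟨x, y, rfl, (mySepIff hTtree huw x y).mpr (Or.inl ⟨hx, hy⟩)⟩

lemma myCutEq {G T : SimpleGraph V} (hle : T ≤ G) (hTtree : T.IsTree)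
    {u w : V} (huw : T.Adj u w)
    {D' : Set (Sym2 V)} (hcut : IsCutEdges G D') (hne : D'.Nonempty)
    (hsub : ∀ f ∈ D', f = s(u,w) ∨ f ∉ T.edgeSet) :
    D' = {f | f ∈ G.edgeSet ∧ ∃ x y, f = s(x,y) ∧ ¬ (T.deleteEdges {s(u,w)}).Reachable x y} := by
  set T' := T.deleteEdges {s(u,w)} with hT'
  have hnr : ¬ T'.Reachable u w := myNotReach hTtree huw
  have htot : ∀ v, T'.Reachable u v ∨ T'.Reachable w v := fun v =>
    myAuxReach (hTtree.isConnected.preconnected u v).some (Or.inl (Reachable.refl _))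
  obtain ⟨A', rfl⟩ := hcut
  have hcross : ∀ a b, T.Adj a b → s(a,b) ≠ s(u,w) → a ∈ A' → b ∈ A' := by
    intro a b hab hne' ha
    by_contra hb
    have hmem : s(a,b) ∈ {f | f ∈ G.edgeSet ∧ ∃ x ∈ A', ∃ y ∈ A'ᶜ, f = s(x, y)} :=
      ⟨hle hab, a, ha, b, hb, rfl⟩
    rcases hsub _ hmem with h1 | h1
    · exact hne' h1
    · exact h1 hab
  have hside : ∀ a b, T'.Adj a b → (a ∈ A' ↔ b ∈ A') := by
    intro a b hab
    have h2 : T.Adj a b ∧ s(a,b) ∉ ({s(u,w)} : Set (Sym2 V)) := by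
      rwa [hT', SimpleGraph.deleteEdges_adj] at hab
    have hba : s(b,a) ≠ s(u,w) := by
      rw [Sym2.eq_swap]; simpa using h2.2
    exact ⟨hcross a b h2.1 (by simpa using h2.2), hcross b a h2.1.symm hba⟩
  have claim2 : ∀ {x y : V}, T'.Reachable x y → (x ∈ A' ↔ y ∈ A') := myReachMemIff hside
  -- find the T-edge crossing A'
  obtain ⟨f0, hf0G, x0, hx0, y0, hy0, rfl⟩ := hne
  obtain ⟨a, ha, b, hb, hab⟩ :=
    myExistsCrossing (hTtree.isConnected.preconnected x0 y0).some hx0 hy0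
  have habe : s(a,b) = s(u,w) := by
    have hmem : s(a,b) ∈ {f | f ∈ G.edgeSet ∧ ∃ x ∈ A', ∃ y ∈ A'ᶜ, f = s(x, y)} :=
      ⟨hle hab, a, ha, b, hb, rfl⟩
    rcases hsub _ hmem with h1 | h1
    · exact h1
    · exact absurd hab h1
  -- main final argument, parametrized to cover both orientations
  have final : ∀ (B : Set V), (∀ x y : V, T'.Reachable x y → (x ∈ B ↔ y ∈ B)) →
      u ∈ B → w ∉ B →
      {f | f ∈ G.edgeSet ∧ ∃ x ∈ B, ∃ y ∈ Bᶜ, f = s(x, y)} =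
      {f | f ∈ G.edgeSet ∧ ∃ x y, f = s(x,y) ∧ ¬ T'.Reachable x y} := by
    intro B hB hu hw
    have hmemB : ∀ v, v ∈ B ↔ T'.Reachable u v := by
      intro v
      constructor
      · intro hv
        rcases htot v with h | h
        · exact h
        · exact absurd ((hB w v h).mpr hv) hw
      · intro h
        exact (hB u v h).mp hu
    ext f
    simp only [Set.mem_setOf_eq, Set.mem_compl_iff]
    refine and_congr_right fun hf => ?_
    constructor
    · rintro ⟨x, hx, y, hy, rfl⟩
      refine ⟨x, y, rfl, ?_⟩
      rw [mySepIff hTtree huw]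
      exact Or.inl ⟨(hmemB x).mp hx, fun h => hy ((hmemB y).mpr h)⟩
    · rintro ⟨x, y, rfl, hr⟩
      rw [mySepIff hTtree huw] at hr
      rcases hr with ⟨hx, hy⟩ | ⟨hx, hy⟩
      · exact ⟨x, (hmemB x).mpr hx, y, fun h => hy ((hmemB y).mp h), rfl⟩
      · exact ⟨y, (hmemB y).mpr hy, x, fun h => hx ((hmemB x).mp h), Sym2.eq_swap⟩
  rw [Sym2.eq_iff] at habe
  rcases habe with ⟨rfl, rfl⟩ | ⟨rfl, rfl⟩
  · exact final A' (fun x y h => claim2 h) ha hb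
  · -- here w = a ∈ A', u = b ∉ A'; use B = A'ᶜ
    have hcompl : {f | f ∈ G.edgeSet ∧ ∃ x ∈ A', ∃ y ∈ A'ᶜ, f = s(x, y)} =
        {f | f ∈ G.edgeSet ∧ ∃ x ∈ A'ᶜ, ∃ y ∈ A'ᶜᶜ, f = s(x, y)} := by
      ext f
      simp only [Set.mem_setOf_eq, Set.mem_compl_iff, not_not, compl_compl]
      refine and_congr_right fun hf => ?_
      constructor
      · rintro ⟨x, hx, y, hy, rfl⟩; exact ⟨y, hy, x, hx, Sym2.eq_swap⟩
      · rintro ⟨x, hx, y, hy, rfl⟩; exact ⟨y, hy, x, hx, Sym2.eq_swap⟩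
    rw [hcompl]
    exact final A'ᶜ (fun x y h => not_congr (claim2 h)) hb (fun h => h ha)


lemma mySeSub {G T : SimpleGraph V} {u w : V} :
    ∀ f ∈ {f | f ∈ G.edgeSet ∧ ∃ x y, f = s(x,y) ∧ ¬ (T.deleteEdges {s(u,w)}).Reachable x y},
      f = s(u,w) ∨ f ∉ T.edgeSet := by
  rintro f ⟨hfG, x, y, rfl, hr⟩
  by_cases hfe : s(x,y) = s(u,w)
  · exact Or.inl hfe
  · refine Or.inr fun hfT => hr ?_
    have hadj : (T.deleteEdges {s(u,w)}).Adj x y := by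
      rw [SimpleGraph.deleteEdges_adj]
      exact ⟨(SimpleGraph.mem_edgeSet T).mp hfT, by simpa using hfe⟩
    exact hadj.reachable

lemma myMinCut {G T : SimpleGraph V} (hle : T ≤ G) (hTtree : T.IsTree)
    {u w : V} (huw : T.Adj u w) :
    IsMinCut G {f | f ∈ G.edgeSet ∧ ∃ x y, f = s(x,y) ∧
      ¬ (T.deleteEdges {s(u,w)}).Reachable x y} := by
  refine ⟨⟨{v | (T.deleteEdges {s(u,w)}).Reachable u v}, myCongSetEq hTtree huw⟩,
    ⟨s(u,w), ⟨hle huw, u, w, rfl, myNotReach hTtree huw⟩⟩, ?_⟩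
  intro D' hD' hcut hne
  exact myCutEq hle hTtree huw hcut hne (fun f hf => mySeSub f (hD' hf))

end MyAux

theorem stmt6 (P : PlaneDual V F) (T : SimpleGraph V) (hT : IsSpanningTree P.G T)
    (e : Sym2 V) (he : e ∈ T.edgeSet) :
    (∃ (v : F) (c : (SimpleGraph.fromEdgeSet
        (insert (P.d e) (dualTree P T).edgeSet)).Walk v v), c.IsCycle) ∧
    ∀ (v : F) (c : (SimpleGraph.fromEdgeSet
        (insert (P.d e) (dualTree P T).edgeSet)).Walk v v), c.IsCycle →
      edgeCong P.G T e = c.length := by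
  classical
  obtain ⟨hle, hTtree⟩ := hT
  revert he
  induction e using Sym2.ind with
  | _ u w =>
  intro he
  rw [SimpleGraph.mem_edgeSet] at he
  have heG : s(u,w) ∈ P.G.edgeSet := hle he
  have hmc : IsMinCut P.G {f | f ∈ P.G.edgeSet ∧ ∃ x y, f = s(x,y) ∧
      ¬ (T.deleteEdges {s(u,w)}).Reachable x y} := myMinCut hle hTtree he
  have hSeG : {f | f ∈ P.G.edgeSet ∧ ∃ x y, f = s(x,y) ∧
      ¬ (T.deleteEdges {s(u,w)}).Reachable x y} ⊆ P.G.edgeSet := fun f hf => hf.1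
  have hHedge : ∀ f ∈ {f | f ∈ P.G.edgeSet ∧ ∃ x y, f = s(x,y) ∧
      ¬ (T.deleteEdges {s(u,w)}).Reachable x y},
      P.d f ∈ (SimpleGraph.fromEdgeSet
        (insert (P.d s(u,w)) (dualTree P T).edgeSet)).edgeSet := by
    intro f hf
    have hfG : f ∈ P.G.edgeSet := hf.1
    have hdG : P.d f ∈ P.Gd.edgeSet := P.dBij.mapsTo hfG
    have hnd : ¬ (P.d f).IsDiag := P.Gd.not_isDiag_of_mem_edgeSet hdG
    rw [SimpleGraph.edgeSet_fromEdgeSet]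
    refine ⟨?_, hnd⟩
    rcases mySeSub f hf with hfe | hfT
    · rw [hfe]; exact Set.mem_insert _ _
    · refine Set.mem_insert_iff.mpr (Or.inr ?_)
      rw [dualTree, SimpleGraph.edgeSet_fromEdgeSet]
      exact ⟨⟨f, ⟨hfG, hfT⟩, rfl⟩, hnd⟩
  have hHGd : (SimpleGraph.fromEdgeSet
      (insert (P.d s(u,w)) (dualTree P T).edgeSet)).edgeSet ⊆ P.Gd.edgeSet := by
    rw [SimpleGraph.edgeSet_fromEdgeSet]
    rintro x ⟨hx, -⟩
    rcases Set.mem_insert_iff.mp hx with rfl | hx'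
    · exact P.dBij.mapsTo heG
    · rw [dualTree, SimpleGraph.edgeSet_fromEdgeSet] at hx'
      obtain ⟨⟨g, hg, rfl⟩, -⟩ := hx'
      exact P.dBij.mapsTo hg.1
  constructor
  · -- existence of a cycle
    obtain ⟨v0, c0, hc0, hedges0⟩ := (P.minCut_iff_cycle _ hSeG).mp hmc
    have hc0H : ∀ ed ∈ c0.edges, ed ∈ (SimpleGraph.fromEdgeSet
        (insert (P.d s(u,w)) (dualTree P T).edgeSet)).edgeSet := by
      intro ed hed
      have hm : ed ∈ P.d '' {f | f ∈ P.G.edgeSet ∧ ∃ x y, f = s(x,y) ∧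
          ¬ (T.deleteEdges {s(u,w)}).Reachable x y} := by
        rw [hedges0]; exact hed
      obtain ⟨f, hf, rfl⟩ := hm
      exact hHedge f hf
    exact ⟨v0, c0.transfer _ hc0H, hc0.transfer hc0H⟩
  · -- every cycle has length the congestion
    intro v c hc
    have hcedge : ∀ ed ∈ c.edges, ed ∈ P.Gd.edgeSet := fun ed hed =>
      hHGd (c.edges_subset_edgeSet hed)
    have hc2 : (c.transfer P.Gd hcedge).IsCycle := hc.transfer hcedge
    have hDG : (P.G.edgeSet ∩ P.d ⁻¹' {x | x ∈ c.edges}) ⊆ P.G.edgeSet :=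
      Set.inter_subset_left
    have hDim : P.d '' (P.G.edgeSet ∩ P.d ⁻¹' {x | x ∈ c.edges}) = {x | x ∈ c.edges} := by
      apply Set.Subset.antisymm
      · rintro x ⟨f, hf, rfl⟩; exact hf.2
      · intro x hx
        have hxGd : x ∈ P.Gd.edgeSet := hHGd (c.edges_subset_edgeSet hx)
        obtain ⟨f, hfG, rfl⟩ := P.dBij.surjOn hxGd
        exact ⟨f, ⟨hfG, hx⟩, rfl⟩
    have hDcyc : IsCycleEdges P.Gd
        (P.d '' (P.G.edgeSet ∩ P.d ⁻¹' {x | x ∈ c.edges})) := by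
      refine ⟨v, c.transfer P.Gd hcedge, hc2, ?_⟩
      rw [hDim]
      ext x
      simp [SimpleGraph.Walk.edges_transfer]
    have hmcD : IsMinCut P.G (P.G.edgeSet ∩ P.d ⁻¹' {x | x ∈ c.edges}) :=
      (P.minCut_iff_cycle _ hDG).mpr hDcyc
    have hsubD : ∀ f ∈ (P.G.edgeSet ∩ P.d ⁻¹' {x | x ∈ c.edges}),
        f = s(u,w) ∨ f ∉ T.edgeSet := by
      intro f hf
      have hdf : P.d f ∈ (SimpleGraph.fromEdgeSet
          (insert (P.d s(u,w)) (dualTree P T).edgeSet)).edgeSet :=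
        c.edges_subset_edgeSet hf.2
      rw [SimpleGraph.edgeSet_fromEdgeSet] at hdf
      rcases Set.mem_insert_iff.mp hdf.1 with h1 | h1
      · exact Or.inl (P.dBij.injOn hf.1 heG h1)
      · refine Or.inr ?_
        rw [dualTree, SimpleGraph.edgeSet_fromEdgeSet] at h1
        obtain ⟨⟨g, hg, hgd⟩, -⟩ := h1
        have hfg : f = g := P.dBij.injOn hf.1 hg.1 hgd.symm
        rw [hfg]; exact hg.2
    have hDeq : (P.G.edgeSet ∩ P.d ⁻¹' {x | x ∈ c.edges}) =
        {f | f ∈ P.G.edgeSet ∧ ∃ x y, f = s(x,y) ∧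
          ¬ (T.deleteEdges {s(u,w)}).Reachable x y} :=
      myCutEq hle hTtree he hmcD.1 hmcD.2.1 hsubD
    have hinj : Set.InjOn P.d (P.G.edgeSet ∩ P.d ⁻¹' {x | x ∈ c.edges}) :=
      P.dBij.injOn.mono hDG
    have h1 : (P.d '' (P.G.edgeSet ∩ P.d ⁻¹' {x | x ∈ c.edges})).ncard =
        (P.G.edgeSet ∩ P.d ⁻¹' {x | x ∈ c.edges}).ncard :=
      Set.ncard_image_of_injOn hinj
    have hcnodup : c.edges.Nodup := hc.edges_nodup
    have hS : ({x | x ∈ c.edges} : Set (Sym2 F)) = ↑c.edges.toFinset := by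
      ext x; simp
    have hScard : ({x | x ∈ c.edges} : Set (Sym2 F)).ncard = c.length := by
      rw [hS, Set.ncard_coe_finset, List.toFinset_card_of_nodup hcnodup,
        SimpleGraph.Walk.length_edges]
    show edgeCong P.G T s(u,w) = c.length
    rw [edgeCong, ← hDeq, ← h1, hDim, hScard]
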